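/- Let α ∈ (0,1) and define g(ξ) = arcsin(αξ)/arcsin(α) for ξ ∈ [−1,1], and let ρ = (1 − √(1 − α²))/α ∈ (0,1). Define the Chebyshev coefficients a_k = (2/π)·∫_0^π g(cos θ)·cos(kθ) dθ for integers k ≥ 1. Then there exists a constant C > 0 (depending on α) such that |a_k| ≤ C·k^{−3/2}·ρ^k for all k ≥ 1. -/

import Mathlib

noncomputable section
namespace Stmt16
open Finset Complex MeasureTheory intervalIntegral
open scoped Real ComplexConjugate



def c : ℕ → ℝ
  | 0 => 1
  | n+1 => c n * (2*n+1) / (2*n+2)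

lemma c_zero : c 0 = 1 := rfl
lemma c_succ (n : ℕ) : c (n+1) = c n * (2*n+1) / (2*n+2) := rfl

lemma c_pos (n : ℕ) : 0 < c n := by
  induction n with
  | zero => norm_num [c_zero]
  | succ n ih => rw [c_succ]; positivity

lemma c_nonneg (n : ℕ) : 0 ≤ c n := (c_pos n).le

lemma c_succ_le (n : ℕ) : c (n+1) ≤ c n := by
  rw [c_succ, div_le_iff₀ (by positivity)]
  nlinarith [c_pos n]

lemma c_anti : Antitone c := antitone_nat_of_succ_le c_succ_le

lemma c_le_one (n : ℕ) : c n ≤ 1 := by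
  simpa [c_zero] using c_anti (Nat.zero_le n)

lemma c_rec (n : ℕ) : (2*(n:ℝ)+2) * c (n+1) = (2*n+1) * c n := by
  rw [c_succ]; field_simp

lemma c_sq (n : ℕ) : (c n)^2 * (n+1) ≤ 1 := by
  induction n with
  | zero => norm_num [c_zero]
  | succ n ih =>
    rw [c_succ]
    have h2 : (0:ℝ) < 2*n+2 := by positivity
    rw [div_pow, div_mul_eq_mul_div, div_le_one (by positivity)]
    have key : (c n * (2*↑n+1))^2 * (↑(n+1)+1) ≤ (c n)^2 * (n+1) * (2*↑n+2)^2 := by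
      have : ((2*(n:ℝ)+1))^2 * (↑n+2) ≤ (↑n+1) * (2*↑n+2)^2 := by nlinarith [Nat.cast_nonneg (α := ℝ) n]
      calc (c n * (2*↑n+1))^2 * (↑(n+1)+1) = (c n)^2 * ((2*↑n+1)^2 * (↑n+2)) := by push_cast; ring
        _ ≤ (c n)^2 * ((↑n+1) * (2*↑n+2)^2) := by
            apply mul_le_mul_of_nonneg_left this (by positivity)
        _ = (c n)^2 * (n+1) * (2*↑n+2)^2 := by ring
    calc (c n * (2*↑n+1))^2 * (↑(n+1)+1) ≤ (c n)^2 * (n+1) * (2*↑n+2)^2 := key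
      _ ≤ 1 * (2*↑n+2)^2 := by apply mul_le_mul_of_nonneg_right ih (by positivity)
      _ = (2*↑n+2)^2 := one_mul _

lemma c_le_inv_sqrt (n : ℕ) : c n ≤ 1 / Real.sqrt (n+1) := by
  have h1 : (0:ℝ) < Real.sqrt (n+1) := Real.sqrt_pos.2 (by positivity)
  rw [le_div_iff₀ h1]
  have := c_sq n
  nlinarith [Real.sq_sqrt (show (0:ℝ) ≤ (n:ℝ)+1 by positivity), c_pos n, h1,
    Real.sqrt_nonneg ((n:ℝ)+1)]



def u (n : ℕ) : ℝ := ∑ i ∈ range (n+1), c i * c (n-i)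
def T (n : ℕ) : ℝ := ∑ i ∈ range (n+1), (i:ℝ) * (c i * c (n-i))

lemma two_T (n : ℕ) : 2 * T n = n * u n := by
  have hrefl : T n = ∑ i ∈ range (n+1), ((n-i : ℕ):ℝ) * (c (n-i) * c i) := by
    rw [T]
    rw [← Finset.sum_range_reflect (fun i => (i:ℝ) * (c i * c (n-i))) (n+1)]
    apply Finset.sum_congr rfl
    intro i hi
    simp only [mem_range] at hi
    have h1 : n + 1 - 1 - i = n - i := by omega
    have h2 : n - (n - i) = i := by omega
    rw [h1, h2]
  have : 2 * T n = T n + T n := by ring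
  rw [this]
  nth_rewrite 2 [hrefl]
  rw [T, ← Finset.sum_add_distrib, u, Finset.mul_sum]
  apply Finset.sum_congr rfl
  intro i hi
  simp only [mem_range] at hi
  have : ((n-i : ℕ):ℝ) = (n:ℝ) - i := by
    rw [Nat.cast_sub (by omega)]
  rw [this]; ring

lemma T_step (n : ℕ) : 2 * T (n+1) = 2 * T n + u n := by
  have h1 : 2 * T (n+1) = ∑ i ∈ range (n+2), 2*(i:ℝ) * (c i * c (n+1-i)) := by
    rw [T, Finset.mul_sum]; apply Finset.sum_congr rfl; intros; ring
  rw [h1, Finset.sum_range_succ' (fun i => 2*(i:ℝ) * (c i * c (n+1-i))) (n+1)]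
  simp only [Nat.cast_zero, mul_zero, zero_mul, add_zero]
  have h2 : ∀ i ∈ range (n+1), 2*((i+1:ℕ):ℝ) * (c (i+1) * c (n+1-(i+1))) =
      (2*(i:ℝ)+1) * (c i * c (n-i)) := by
    intro i _
    have : n + 1 - (i+1) = n - i := by omega
    rw [this]
    have h := c_rec i
    push_cast
    linear_combination c (n-i) * h
  rw [Finset.sum_congr rfl h2]
  rw [T, u, Finset.mul_sum, ← Finset.sum_add_distrib]
  apply Finset.sum_congr rfl
  intros; ring

lemma u_eq_one (n : ℕ) : u n = 1 := by
  induction n with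
  | zero => simp [u, c_zero]
  | succ n ih =>
    have h1 := two_T (n+1)
    have h2 := T_step n
    have h3 := two_T n
    have : ((n:ℝ)+1) * u (n+1) = ((n:ℝ)+1) * u n := by
      push_cast at h1
      nlinarith
    have hpos : ((n:ℝ)+1) ≠ 0 := by positivity
    rw [ih] at this
    field_simp at this
    exact this



lemma int_exp (m : ℤ) : (∫ θ in (0:ℝ)..π, Complex.exp (2*m*θ*Complex.I)) =
    if m = 0 then (π:ℂ) else 0 := by
  rcases eq_or_ne m 0 with h | h
  · simp [h]
  · rw [if_neg h]
    have hc : (2*(m:ℂ)*Complex.I) ≠ 0 := by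
      simp [Complex.I_ne_zero, h]
    have : (∫ θ in (0:ℝ)..π, Complex.exp (2*m*θ*Complex.I)) =
        ∫ θ in (0:ℝ)..π, Complex.exp ((2*(m:ℂ)*Complex.I) * θ) := by
      congr 1; ext θ; ring_nf
    rw [this, integral_exp_mul_complex hc]
    have h1 : (2*(m:ℂ)*Complex.I) * π = m * (2*π*Complex.I) := by push_cast; ring
    rw [h1, Complex.exp_int_mul_two_pi_mul_I]
    simp

lemma int_cos_exp (b : ℕ) (m : ℤ) :
    (∫ θ in (0:ℝ)..π, (Real.cos (2*b*θ) : ℂ) * Complex.exp (2*m*θ*Complex.I)) =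
    (π/2) * ((if m = -(b:ℤ) then 1 else 0) + (if m = (b:ℤ) then 1 else 0)) := by
  have hpt : ∀ θ : ℝ, (Real.cos (2*b*θ) : ℂ) * Complex.exp (2*m*θ*Complex.I) =
      (Complex.exp (2*((m+b : ℤ) : ℂ)*θ*Complex.I) +
        Complex.exp (2*((m-b : ℤ) : ℂ)*θ*Complex.I)) / 2 := by
    intro θ
    rw [Complex.ofReal_cos]
    rw [show ((2*(b:ℕ)*θ : ℝ) : ℂ) = 2*(b:ℂ)*θ by push_cast; ring]
    rw [Complex.cos]
    rw [div_mul_eq_mul_div, add_mul, ← Complex.exp_add, ← Complex.exp_add]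
    congr 2 <;> push_cast <;> ring
  rw [intervalIntegral.integral_congr (fun θ _ => hpt θ)]
  rw [intervalIntegral.integral_div]
  rw [intervalIntegral.integral_add]
  · rw [int_exp (m+b), int_exp (m-b)]
    have h1 : (m + (b:ℤ) = 0) ↔ (m = -(b:ℤ)) := by omega
    have h2 : (m - (b:ℤ) = 0) ↔ (m = (b:ℤ)) := by omega
    simp only [h1, h2]
    by_cases hA : m = -(b:ℤ) <;> by_cases hB : m = (b:ℤ) <;> simp [hA, hB] <;> split_ifs <;> ring
  · apply Continuous.intervalIntegrable; fun_prop
  · apply Continuous.intervalIntegrable; fun_prop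

lemma sin_mul_sin (j : ℕ) (θ : ℝ) :
    Real.sin θ * Real.sin ((2*j+1) * θ) =
      (Real.cos (2*j*θ) - Real.cos (2*(j+1)*θ)) / 2 := by
  have := Real.cos_sub_cos (2*j*θ) (2*(j+1)*θ)
  have h1 : (2*(j:ℝ)*θ + 2*(j+1)*θ)/2 = (2*j+1)*θ := by ring
  have h2 : (2*(j:ℝ)*θ - 2*(j+1)*θ)/2 = -θ := by ring
  rw [h1, h2, Real.sin_neg] at this
  rw [this]; ring



lemma int_sinsin_bound (j : ℕ) (m : ℤ) :
    ‖∫ θ in (0:ℝ)..π, ((Real.sin θ * Real.sin ((2*(j:ℝ)+1)*θ) : ℝ) : ℂ)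
        * Complex.exp (2*m*θ*Complex.I)‖ ≤
    (π/2) * (((if m = (j:ℤ) ∨ m = -(j:ℤ) then 1 else 0) : ℝ)
      + (if m = (j:ℤ)+1 ∨ m = -((j:ℤ)+1) then 1 else 0)) := by
  have hpt : ∀ θ : ℝ, ((Real.sin θ * Real.sin ((2*(j:ℝ)+1)*θ) : ℝ) : ℂ)
        * Complex.exp (2*m*θ*Complex.I)
      = ((Real.cos (2*j*θ) : ℂ) * Complex.exp (2*m*θ*Complex.I)) / 2
        - ((Real.cos (2*((j+1:ℕ):ℝ)*θ) : ℂ) * Complex.exp (2*m*θ*Complex.I)) / 2 := by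
    intro θ
    have h := sin_mul_sin j θ
    have h2 : ((j+1:ℕ):ℝ) = (j:ℝ)+1 := by push_cast; ring
    rw [h2, h]
    push_cast
    ring
  rw [intervalIntegral.integral_congr (fun θ _ => hpt θ)]
  rw [intervalIntegral.integral_sub, intervalIntegral.integral_div,
    intervalIntegral.integral_div, int_cos_exp j m, int_cos_exp (j+1) m]
  · have hππ : (0:ℝ) ≤ π := Real.pi_nonneg
    have key : ∀ x y z t : ℝ, x ∈ ({0,1} : Set ℝ) → y ∈ ({0,1} : Set ℝ) →
        z ∈ ({0,1} : Set ℝ) → t ∈ ({0,1} : Set ℝ) →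
        ‖((π/2 * (x + y) : ℝ) : ℂ)/2 - ((π/2 * (z + t) : ℝ) : ℂ)/2‖
          ≤ (π/4) * (x+y+z+t) := by
      intro x y z t hx hy hz ht
      have : ((π/2 * (x + y) : ℝ) : ℂ)/2 - ((π/2 * (z + t) : ℝ) : ℂ)/2
          = ((π/4 * (x + y) - π/4 * (z+t) : ℝ) : ℂ) := by push_cast; ring
      rw [this, Complex.norm_real]
      rw [Real.norm_eq_abs, abs_le]
      rcases hx with rfl|rfl <;> rcases hy with rfl|rfl <;> rcases hz with rfl|rfl <;>
        rcases ht with rfl|rfl <;> constructor <;> nlinarith [Real.pi_pos]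
    have h1 : ((π:ℂ)/2) * ((if m = -(j:ℤ) then 1 else 0) + (if m = (j:ℤ) then 1 else 0))
        = (((π/2) * ((if m = -(j:ℤ) then (1:ℝ) else 0) + (if m = (j:ℤ) then (1:ℝ) else 0)) : ℝ) : ℂ) := by
      push_cast [apply_ite (fun x : ℝ => (x : ℂ))]
      norm_num
    have h2 : ((π:ℂ)/2) * ((if m = -((j:ℤ)+1) then 1 else 0) + (if m = ((j:ℤ)+1) then 1 else 0))
        = (((π/2) * ((if m = -((j:ℤ)+1) then (1:ℝ) else 0) + (if m = ((j:ℤ)+1) then (1:ℝ) else 0)) : ℝ) : ℂ) := by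
      push_cast [apply_ite (fun x : ℝ => (x : ℂ))]
      norm_num
    have hj1 : ((j:ℤ)+1) = ((j+1:ℕ):ℤ) := by push_cast; ring
    rw [← hj1] at *
    rw [h1, h2]
    refine le_trans (key _ _ _ _ (by split_ifs <;> simp) (by split_ifs <;> simp)
      (by split_ifs <;> simp) (by split_ifs <;> simp)) ?_
    -- now a pure real inequality on indicators
    split_ifs with h1' h2' h3' h4' h5' h6' h7' h8' h9' <;> try omega
    all_goals nlinarith [Real.pi_pos]
  · apply Continuous.intervalIntegrable
    apply Continuous.div_const
    fun_prop
  · apply Continuous.intervalIntegrable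
    apply Continuous.div_const
    fun_prop



lemma maxc (n i : ℕ) (h : i ≤ n) : c i * c (n-i) ≤ c ((n+1)/2) := by
  rcases le_or_gt ((n+1)/2) i with h1 | h1
  · calc c i * c (n-i) ≤ c ((n+1)/2) * 1 :=
        mul_le_mul (c_anti h1) (c_le_one _) (c_pos _).le (c_pos _).le
      _ = c ((n+1)/2) := mul_one _
  · have h2 : (n+1)/2 ≤ n - i := by omega
    calc c i * c (n-i) ≤ 1 * c ((n+1)/2) :=
        mul_le_mul (c_le_one _) (c_anti h2) (c_pos _).le (by linarith [c_le_one i, c_pos i])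
      _ = c ((n+1)/2) := one_mul _

lemma sum_single (n : ℕ) (t : ℤ) :
    (∑ i ∈ range (n+1), c i * c (n-i) * (if 2*(i:ℤ) - n = t then (1:ℝ) else 0)) ≤
    if t.natAbs ≤ n then c ((n+1)/2) else 0 := by
  by_cases hex : ∃ i0, i0 ≤ n ∧ 2*(i0:ℤ) - n = t
  · obtain ⟨i0, hi0n, hi0⟩ := hex
    have hz : ∀ i ∈ range (n+1), i ≠ i0 →
        c i * c (n-i) * (if 2*(i:ℤ) - n = t then (1:ℝ) else 0) = 0 := by
      intro i _ hne
      rw [if_neg (by omega), mul_zero]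
    rw [Finset.sum_eq_single i0 hz (fun h => absurd (mem_range.2 (by omega)) h)]
    rw [if_pos hi0, mul_one]
    have habs : t.natAbs ≤ n := by omega
    rw [if_pos habs]
    exact maxc n i0 hi0n
  · push_neg at hex
    have hz : ∀ i ∈ range (n+1), c i * c (n-i) * (if 2*(i:ℤ) - n = t then (1:ℝ) else 0) = 0 := by
      intro i hi
      rw [if_neg (hex i (by simpa [Nat.lt_succ_iff] using hi)), mul_zero]
    rw [Finset.sum_eq_zero hz]
    split_ifs
    · exact (c_pos _).le
    · exact le_refl 0

lemma sum_inds (n j : ℕ) :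
    (∑ i ∈ range (n+1), c i * c (n-i) *
      ((if (2*(i:ℤ)-n = (j:ℤ) ∨ 2*(i:ℤ)-n = -(j:ℤ)) then (1:ℝ) else 0)
       + (if (2*(i:ℤ)-n = (j:ℤ)+1 ∨ 2*(i:ℤ)-n = -((j:ℤ)+1)) then (1:ℝ) else 0)))
    ≤ if j ≤ n then 4 * c ((n+1)/2) else 0 := by
  have step : ∀ i ∈ range (n+1), c i * c (n-i) *
      ((if (2*(i:ℤ)-n = (j:ℤ) ∨ 2*(i:ℤ)-n = -(j:ℤ)) then (1:ℝ) else 0)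
       + (if (2*(i:ℤ)-n = (j:ℤ)+1 ∨ 2*(i:ℤ)-n = -((j:ℤ)+1)) then (1:ℝ) else 0))
      ≤ c i * c (n-i) * ((if 2*(i:ℤ)-n = (j:ℤ) then (1:ℝ) else 0)
        + (if 2*(i:ℤ)-n = -(j:ℤ) then (1:ℝ) else 0)
        + (if 2*(i:ℤ)-n = (j:ℤ)+1 then (1:ℝ) else 0)
        + (if 2*(i:ℤ)-n = -((j:ℤ)+1) then (1:ℝ) else 0)) := by
    intro i _
    have hcc : 0 ≤ c i * c (n-i) := mul_nonneg (c_pos _).le (c_pos _).le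
    apply mul_le_mul_of_nonneg_left _ hcc
    have ineq : ∀ (P Q : Prop) [Decidable P] [Decidable Q],
        (if P ∨ Q then (1:ℝ) else 0) ≤ (if P then (1:ℝ) else 0) + (if Q then (1:ℝ) else 0) := by
      intro P Q _ _
      by_cases hP : P <;> by_cases hQ : Q <;> simp [hP, hQ]
    have i1 := ineq (2*(i:ℤ)-n = (j:ℤ)) (2*(i:ℤ)-n = -(j:ℤ))
    have i2 := ineq (2*(i:ℤ)-n = (j:ℤ)+1) (2*(i:ℤ)-n = -((j:ℤ)+1))
    linarith
  refine le_trans (Finset.sum_le_sum step) ?_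
  have expand : (∑ i ∈ range (n+1), c i * c (n-i) *
      ((if 2*(i:ℤ)-n = (j:ℤ) then (1:ℝ) else 0)
        + (if 2*(i:ℤ)-n = -(j:ℤ) then (1:ℝ) else 0)
        + (if 2*(i:ℤ)-n = (j:ℤ)+1 then (1:ℝ) else 0)
        + (if 2*(i:ℤ)-n = -((j:ℤ)+1) then (1:ℝ) else 0)))
      = (∑ i ∈ range (n+1), c i * c (n-i) * (if 2*(i:ℤ)-n = (j:ℤ) then (1:ℝ) else 0))
      + (∑ i ∈ range (n+1), c i * c (n-i) * (if 2*(i:ℤ)-n = -(j:ℤ) then (1:ℝ) else 0))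
      + (∑ i ∈ range (n+1), c i * c (n-i) * (if 2*(i:ℤ)-n = (j:ℤ)+1 then (1:ℝ) else 0))
      + (∑ i ∈ range (n+1), c i * c (n-i) * (if 2*(i:ℤ)-n = -((j:ℤ)+1) then (1:ℝ) else 0)) := by
    rw [← Finset.sum_add_distrib, ← Finset.sum_add_distrib, ← Finset.sum_add_distrib]
    apply Finset.sum_congr rfl; intros; ring
  rw [expand]
  have b1 := sum_single n (j:ℤ)
  have b2 := sum_single n (-(j:ℤ))
  have b3 := sum_single n ((j:ℤ)+1)
  have b4 := sum_single n (-((j:ℤ)+1))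
  have n1 : ((j:ℤ)).natAbs = j := by omega
  have n2 : (-(j:ℤ)).natAbs = j := by omega
  have n3 : ((j:ℤ)+1).natAbs = j+1 := by omega
  have n4 : (-((j:ℤ)+1)).natAbs = j+1 := by omega
  rw [n1] at b1; rw [n2] at b2; rw [n3] at b3; rw [n4] at b4
  by_cases hj : j ≤ n
  · rw [if_pos hj]
    rw [if_pos hj] at b1 b2
    have hc : (0:ℝ) ≤ c ((n+1)/2) := (c_pos _).le
    have b3' : (∑ i ∈ range (n+1), c i * c (n-i) * (if 2*(i:ℤ)-n = (j:ℤ)+1 then (1:ℝ) else 0))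
        ≤ c ((n+1)/2) := le_trans b3 (by split_ifs <;> simp [hc])
    have b4' : (∑ i ∈ range (n+1), c i * c (n-i) * (if 2*(i:ℤ)-n = -((j:ℤ)+1) then (1:ℝ) else 0))
        ≤ c ((n+1)/2) := le_trans b4 (by split_ifs <;> simp [hc])
    linarith
  · rw [if_neg hj]
    rw [if_neg hj] at b1 b2
    rw [if_neg (by omega)] at b3
    rw [if_neg (by omega)] at b4
    linarith


def wf (ρ θ : ℝ) : ℂ := (ρ:ℂ)^2 * Complex.exp (2*θ*Complex.I)
def P (ρ θ : ℝ) : ℂ := ∑' n : ℕ, (c n : ℂ) * (wf ρ θ)^n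
def F (ρ : ℝ) (n : ℕ) (θ : ℝ) : ℂ :=
  ∑ i ∈ range (n+1), ((c i : ℂ) * (wf ρ θ)^i) * ((c (n-i) : ℂ) * (conj (wf ρ θ))^(n-i))

lemma conv_one (n : ℕ) : (∑ i ∈ range (n+1), c i * c (n-i)) = 1 := u_eq_one n



lemma norm_wf (ρ θ : ℝ) (hρ : 0 ≤ ρ) : ‖wf ρ θ‖ = ρ^2 := by
  rw [wf]
  rw [show (2:ℂ)*θ*Complex.I = ((2*θ : ℝ):ℂ)*Complex.I by push_cast; ring]
  rw [norm_mul, norm_pow, Complex.norm_real, Real.norm_eq_abs, _root_.abs_of_nonneg hρ,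
    Complex.norm_exp_ofReal_mul_I, mul_one]

lemma summable_norm_P {ρ : ℝ} (hρ0 : 0 ≤ ρ) (hρ1 : ρ < 1) (θ : ℝ) :
    Summable (fun n : ℕ => ‖(c n : ℂ) * (wf ρ θ)^n‖) := by
  apply Summable.of_nonneg_of_le (fun n => norm_nonneg _)
    (fun n => ?_) (summable_geometric_of_lt_one (by positivity)
      (by nlinarith : ρ^2 < 1))
  rw [norm_mul, norm_pow, norm_wf ρ θ hρ0, Complex.norm_real, Real.norm_eq_abs,
    _root_.abs_of_nonneg (c_pos n).le]
  calc c n * (ρ^2)^n ≤ 1 * (ρ^2)^n := by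
        apply mul_le_mul_of_nonneg_right (c_le_one n) (by positivity)
    _ = (ρ^2)^n := one_mul _

lemma summable_norm_Pc {ρ : ℝ} (hρ0 : 0 ≤ ρ) (hρ1 : ρ < 1) (θ : ℝ) :
    Summable (fun n : ℕ => ‖(c n : ℂ) * (conj (wf ρ θ))^n‖) := by
  have := summable_norm_P hρ0 hρ1 (θ := θ)
  simpa [norm_mul, norm_pow, RCLike.norm_conj] using this

lemma conj_P (ρ θ : ℝ) : conj (P ρ θ) = ∑' n : ℕ, (c n : ℂ) * (conj (wf ρ θ))^n := by
  rw [P, Complex.conj_tsum]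
  congr 1; ext n
  rw [map_mul, map_pow, Complex.conj_ofReal]

lemma P_mul_conj {ρ : ℝ} (hρ0 : 0 ≤ ρ) (hρ1 : ρ < 1) (θ : ℝ) :
    P ρ θ * conj (P ρ θ) = ∑' n : ℕ, F ρ n θ := by
  rw [conj_P]
  rw [P]
  exact tsum_mul_tsum_eq_tsum_sum_range_of_summable_norm
    (summable_norm_P hρ0 hρ1 θ) (summable_norm_Pc hρ0 hρ1 θ)

lemma P_sq {ρ : ℝ} (hρ0 : 0 ≤ ρ) (hρ1 : ρ < 1) (θ : ℝ) :
    (P ρ θ)^2 = (1 - wf ρ θ)⁻¹ := by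
  have hw : ‖wf ρ θ‖ < 1 := by rw [norm_wf ρ θ hρ0]; nlinarith
  rw [sq, P, tsum_mul_tsum_eq_tsum_sum_range_of_summable_norm
    (summable_norm_P hρ0 hρ1 θ) (summable_norm_P hρ0 hρ1 θ)]
  rw [← tsum_geometric_of_norm_lt_one hw]
  congr 1; ext n
  have hterm : ∀ i ∈ range (n+1), (c i : ℂ) * (wf ρ θ)^i * ((c (n-i) : ℂ) * (wf ρ θ)^(n-i))
      = ((c i * c (n-i) : ℝ) : ℂ) * (wf ρ θ)^n := by
    intro i hi
    simp only [mem_range, Nat.lt_succ_iff] at hi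
    calc (c i : ℂ) * (wf ρ θ)^i * ((c (n-i) : ℂ) * (wf ρ θ)^(n-i))
        = ((c i : ℂ) * (c (n-i) : ℂ)) * ((wf ρ θ)^i * (wf ρ θ)^(n-i)) := by ring
      _ = ((c i * c (n-i) : ℝ) : ℂ) * (wf ρ θ)^n := by
          rw [← pow_add, show i + (n - i) = n by omega]
          push_cast; ring
  rw [Finset.sum_congr rfl hterm, ← Finset.sum_mul, ← Complex.ofReal_sum, conv_one n]
  simp

lemma normSq_P_sq {ρ : ℝ} (hρ0 : 0 ≤ ρ) (hρ1 : ρ < 1) (θ : ℝ) :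
    (Complex.normSq (P ρ θ))^2 = (Complex.normSq (1 - wf ρ θ))⁻¹ := by
  have h1 : (Complex.normSq (P ρ θ))^2 = Complex.normSq ((P ρ θ)^2) := by
    rw [map_pow]
  rw [h1, P_sq hρ0 hρ1 θ, Complex.normSq_inv]

lemma normSq_one_sub_wf {ρ α : ℝ} (θ : ℝ) (hkey : α * (1+ρ^2) = 2*ρ) :
    Complex.normSq (1 - wf ρ θ) = (1+ρ^2)^2 * (1 - (α*Real.cos θ)^2) := by
  have hcast : wf ρ θ = ((ρ^2 : ℝ):ℂ) * Complex.exp (((2*θ : ℝ):ℂ)*Complex.I) := by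
    rw [wf]; push_cast; ring_nf
  have hre : (1 - wf ρ θ).re = 1 - ρ^2 * Real.cos (2*θ) := by
    rw [hcast]
    simp only [Complex.sub_re, Complex.one_re, Complex.mul_re, Complex.ofReal_re,
      Complex.ofReal_im, Complex.exp_ofReal_mul_I_re, Complex.exp_ofReal_mul_I_im,
      zero_mul, sub_zero]
  have him : (1 - wf ρ θ).im = -(ρ^2 * Real.sin (2*θ)) := by
    rw [hcast]
    simp only [Complex.sub_im, Complex.one_im, Complex.mul_im, Complex.ofReal_re,
      Complex.ofReal_im, Complex.exp_ofReal_mul_I_re, Complex.exp_ofReal_mul_I_im,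
      zero_mul, add_zero, zero_sub]
  rw [Complex.normSq_apply, hre, him]
  have hpyth : (Real.sin (2*θ))^2 + (Real.cos (2*θ))^2 = 1 := Real.sin_sq_add_cos_sq (2*θ)
  have hc2 : Real.cos (2*θ) = 2*(Real.cos θ)^2 - 1 := Real.cos_two_mul θ
  calc (1 - ρ^2*Real.cos (2*θ)) * (1 - ρ^2*Real.cos (2*θ))
        + (-(ρ^2 * Real.sin (2*θ))) * (-(ρ^2 * Real.sin (2*θ)))
      = 1 - 2*ρ^2*Real.cos (2*θ) + ρ^4*((Real.sin (2*θ))^2 + (Real.cos (2*θ))^2) := by ring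
    _ = 1 - 2*ρ^2*(2*(Real.cos θ)^2 - 1) + ρ^4 := by rw [hpyth, hc2]; ring
    _ = (1+ρ^2)^2 * (1 - (α*Real.cos θ)^2) := by
        linear_combination ((Real.cos θ)^2 * (α*(1+ρ^2)+2*ρ)) * hkey

lemma inv_sqrt_eq {ρ α : ℝ} (hρ0 : 0 ≤ ρ) (hρ1 : ρ < 1) (θ : ℝ) (hα0 : 0 < α) (hα1 : α < 1)
    (hkey : α * (1+ρ^2) = 2*ρ) :
    1 / Real.sqrt (1 - (α*Real.cos θ)^2) = (1+ρ^2) * Complex.normSq (P ρ θ) := by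
  have hx : (α*Real.cos θ)^2 < 1 := by
    have h1 : |α*Real.cos θ| ≤ α := by
      rw [abs_mul, _root_.abs_of_pos hα0]
      calc α * |Real.cos θ| ≤ α * 1 :=
          mul_le_mul_of_nonneg_left (Real.abs_cos_le_one θ) hα0.le
        _ = α := mul_one α
    calc (α*Real.cos θ)^2 = |α*Real.cos θ|^2 := (_root_.sq_abs _).symm
      _ ≤ α^2 := by nlinarith [abs_nonneg (α*Real.cos θ)]
      _ < 1 := by nlinarith
  have hpos : 0 < 1 - (α*Real.cos θ)^2 := by linarith
  have hsq : 0 < Real.sqrt (1 - (α*Real.cos θ)^2) := Real.sqrt_pos.2 hpos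
  set a := Complex.normSq (P ρ θ) with ha
  set b := 1 / Real.sqrt (1 - (α*Real.cos θ)^2) with hb
  have hb0 : 0 < b := by positivity
  have ha0 : 0 ≤ a := Complex.normSq_nonneg _
  have h1ρ : (0:ℝ) < 1 + ρ^2 := by positivity
  have hsqs : (Real.sqrt (1 - (α*Real.cos θ)^2))^2 = 1 - (α*Real.cos θ)^2 :=
    Real.sq_sqrt hpos.le
  have key : ((1+ρ^2) * a)^2 = b^2 := by
    have h2 := normSq_P_sq hρ0 hρ1 θ
    rw [← ha, normSq_one_sub_wf θ hkey] at h2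
    have hbsq : b^2 = (1 - (α*Real.cos θ)^2)⁻¹ := by
      rw [hb, div_pow, one_pow, hsqs, one_div]
    rw [mul_pow, h2, hbsq, mul_inv]
    rw [← mul_assoc, mul_inv_cancel₀ (by positivity : ((1+ρ^2)^2 : ℝ) ≠ 0), one_mul]
  have h3 : ((1+ρ^2)*a - b) * ((1+ρ^2)*a + b) = 0 := by nlinarith [key]
  rcases mul_eq_zero.1 h3 with h | h
  · linarith
  · nlinarith [mul_nonneg h1ρ.le ha0]



lemma cont_wf (ρ : ℝ) : Continuous (wf ρ) := by
  unfold wf; fun_prop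

lemma cont_F (ρ : ℝ) (n : ℕ) : Continuous (F ρ n) := by
  unfold F
  apply continuous_finset_sum
  intro i _
  exact ((continuous_const.mul ((cont_wf ρ).pow i)).mul
    (continuous_const.mul (((Complex.continuous_conj.comp (cont_wf ρ))).pow (n-i))))

lemma wpow {ρ : ℝ} (θ : ℝ) {i n : ℕ} (hin : i ≤ n) :
    (wf ρ θ)^i * (conj (wf ρ θ))^(n-i)
      = ((ρ^(2*n) : ℝ):ℂ) * Complex.exp (2*((2*(i:ℤ)-(n:ℤ) : ℤ):ℂ)*θ*Complex.I) := by
  have hconj : conj (wf ρ θ) = (ρ:ℂ)^2 * Complex.exp (-(2*θ*Complex.I)) := by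
    rw [wf, map_mul, map_pow, Complex.conj_ofReal, ← Complex.exp_conj]
    congr 1
    simp only [map_mul, map_ofNat, Complex.conj_ofReal, Complex.conj_I]
    ring
  rw [hconj, wf, mul_pow, mul_pow, ← Complex.exp_nat_mul, ← Complex.exp_nat_mul]
  have hρpow : ((ρ:ℂ)^2)^i * ((ρ:ℂ)^2)^(n-i) = ((ρ^(2*n) : ℝ):ℂ) := by
    rw [← pow_add, show i + (n-i) = n by omega]
    push_cast
    ring
  calc ((ρ:ℂ)^2)^i * Complex.exp (i*(2*θ*Complex.I)) *
        (((ρ:ℂ)^2)^(n-i) * Complex.exp ((n-i : ℕ)*(-(2*θ*Complex.I))))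
      = (((ρ:ℂ)^2)^i * ((ρ:ℂ)^2)^(n-i)) *
        (Complex.exp (i*(2*θ*Complex.I)) * Complex.exp ((n-i : ℕ)*(-(2*θ*Complex.I)))) := by ring
    _ = ((ρ^(2*n) : ℝ):ℂ) * Complex.exp (2*((2*(i:ℤ)-(n:ℤ) : ℤ):ℂ)*θ*Complex.I) := by
        rw [hρpow, ← Complex.exp_add]
        congr 2
        have : ((n - i : ℕ) : ℂ) = (n:ℂ) - i := by
          rw [Nat.cast_sub hin]
        rw [this]
        push_cast
        ring

lemma norm_G_le {ρ : ℝ} (hρ0 : 0 ≤ ρ) (j n : ℕ) (θ : ℝ) :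
    ‖((Real.sin θ * Real.sin ((2*(j:ℝ)+1)*θ) : ℝ) : ℂ) * F ρ n θ‖ ≤ (n+1) * (ρ^2)^n := by
  rw [norm_mul]
  have h1 : ‖((Real.sin θ * Real.sin ((2*(j:ℝ)+1)*θ) : ℝ) : ℂ)‖ ≤ 1 := by
    rw [Complex.norm_real, Real.norm_eq_abs, abs_mul]
    calc |Real.sin θ| * |Real.sin ((2*(j:ℝ)+1)*θ)| ≤ 1 * 1 :=
        mul_le_mul (Real.abs_sin_le_one θ) (Real.abs_sin_le_one _)
          (abs_nonneg _) zero_le_one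
      _ = 1 := one_mul 1
  have h2 : ‖F ρ n θ‖ ≤ (n+1) * (ρ^2)^n := by
    rw [F]
    calc ‖∑ i ∈ range (n+1), ((c i : ℂ) * (wf ρ θ)^i) * ((c (n-i) : ℂ) * (conj (wf ρ θ))^(n-i))‖
        ≤ ∑ i ∈ range (n+1), ‖((c i : ℂ) * (wf ρ θ)^i) * ((c (n-i) : ℂ) * (conj (wf ρ θ))^(n-i))‖ :=
          norm_sum_le _ _
      _ ≤ ∑ i ∈ range (n+1), (ρ^2)^n := by
          apply Finset.sum_le_sum
          intro i hi
          simp only [mem_range, Nat.lt_succ_iff] at hi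
          rw [norm_mul, norm_mul, norm_mul, norm_pow, norm_pow, RCLike.norm_conj,
            norm_wf ρ θ hρ0, Complex.norm_real, Complex.norm_real]
          calc ‖c i‖ * (ρ^2)^i * (‖c (n-i)‖ * (ρ^2)^(n-i))
              = (‖c i‖ * ‖c (n-i)‖) * ((ρ^2)^i * (ρ^2)^(n-i)) := by ring
            _ ≤ (1 * 1) * ((ρ^2)^i * (ρ^2)^(n-i)) := by
                apply mul_le_mul_of_nonneg_right
                · apply mul_le_mul _ _ (norm_nonneg _) zero_le_one
                  · rw [Real.norm_eq_abs, _root_.abs_of_nonneg (c_pos i).le]; exact c_le_one i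
                  · rw [Real.norm_eq_abs, _root_.abs_of_nonneg (c_pos _).le]; exact c_le_one _
                · positivity
            _ = (ρ^2)^n := by rw [one_mul, one_mul, ← pow_add, show i + (n-i) = n by omega]
      _ = (n+1) * (ρ^2)^n := by
          rw [Finset.sum_const, Finset.card_range]
          push_cast
          ring
  calc ‖((Real.sin θ * Real.sin ((2*(j:ℝ)+1)*θ) : ℝ) : ℂ)‖ * ‖F ρ n θ‖
      ≤ 1 * ((n+1) * (ρ^2)^n) := mul_le_mul h1 h2 (norm_nonneg _) zero_le_one
    _ = (n+1) * (ρ^2)^n := one_mul _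

lemma per_n_bound {ρ : ℝ} (hρ0 : 0 ≤ ρ) (j n : ℕ) :
    ‖∫ θ in (0:ℝ)..π, ((Real.sin θ * Real.sin ((2*(j:ℝ)+1)*θ) : ℝ) : ℂ) * F ρ n θ‖
      ≤ if j ≤ n then 2*π*(ρ^2)^n * c ((n+1)/2) else 0 := by
  have hexp : ∀ θ : ℝ, ((Real.sin θ * Real.sin ((2*(j:ℝ)+1)*θ) : ℝ) : ℂ) * F ρ n θ
      = ∑ i ∈ range (n+1), ((c i * c (n-i) * ρ^(2*n) : ℝ) : ℂ) *
          (((Real.sin θ * Real.sin ((2*(j:ℝ)+1)*θ) : ℝ) : ℂ)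
            * Complex.exp (2*((2*(i:ℤ)-(n:ℤ) : ℤ):ℂ)*θ*Complex.I)) := by
    intro θ
    rw [F, Finset.mul_sum]
    apply Finset.sum_congr rfl
    intro i hi
    simp only [mem_range, Nat.lt_succ_iff] at hi
    have h1 : ((c i : ℂ) * (wf ρ θ)^i) * ((c (n-i) : ℂ) * (conj (wf ρ θ))^(n-i))
        = ((c i : ℂ) * (c (n-i) : ℂ)) * ((wf ρ θ)^i * (conj (wf ρ θ))^(n-i)) := by ring
    rw [h1, wpow θ hi]
    push_cast
    ring
  rw [intervalIntegral.integral_congr (fun θ _ => hexp θ)]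
  rw [intervalIntegral.integral_finset_sum]
  · calc ‖∑ i ∈ range (n+1), ∫ θ in (0:ℝ)..π, ((c i * c (n-i) * ρ^(2*n) : ℝ) : ℂ) *
          (((Real.sin θ * Real.sin ((2*(j:ℝ)+1)*θ) : ℝ) : ℂ)
            * Complex.exp (2*((2*(i:ℤ)-(n:ℤ) : ℤ):ℂ)*θ*Complex.I))‖
        ≤ ∑ i ∈ range (n+1), ‖∫ θ in (0:ℝ)..π, ((c i * c (n-i) * ρ^(2*n) : ℝ) : ℂ) *
          (((Real.sin θ * Real.sin ((2*(j:ℝ)+1)*θ) : ℝ) : ℂ)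
            * Complex.exp (2*((2*(i:ℤ)-(n:ℤ) : ℤ):ℂ)*θ*Complex.I))‖ := norm_sum_le _ _
      _ ≤ ∑ i ∈ range (n+1), (π/2)*(ρ^2)^n * (c i * c (n-i) *
            ((if (2*(i:ℤ)-n = (j:ℤ) ∨ 2*(i:ℤ)-n = -(j:ℤ)) then (1:ℝ) else 0)
            + (if (2*(i:ℤ)-n = (j:ℤ)+1 ∨ 2*(i:ℤ)-n = -((j:ℤ)+1)) then (1:ℝ) else 0))) := by
          apply Finset.sum_le_sum
          intro i hi
          simp only [mem_range, Nat.lt_succ_iff] at hi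
          rw [intervalIntegral.integral_const_mul, norm_mul]
          have hb := int_sinsin_bound j (2*(i:ℤ)-(n:ℤ))
          have hcoef : ‖((c i * c (n-i) * ρ^(2*n) : ℝ) : ℂ)‖ = c i * c (n-i) * ρ^(2*n) := by
            rw [Complex.norm_real, Real.norm_eq_abs, _root_.abs_of_nonneg
              (mul_nonneg (mul_nonneg (c_pos i).le (c_pos _).le) (by positivity))]
          rw [hcoef]
          have hρn : ρ^(2*n) = (ρ^2)^n := by rw [← pow_mul]
          calc c i * c (n-i) * ρ^(2*n) * ‖∫ θ in (0:ℝ)..π,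
                ((Real.sin θ * Real.sin ((2*(j:ℝ)+1)*θ) : ℝ) : ℂ)
                * Complex.exp (2*((2*(i:ℤ)-(n:ℤ) : ℤ):ℂ)*θ*Complex.I)‖
              ≤ c i * c (n-i) * ρ^(2*n) * ((π/2) *
                (((if 2*(i:ℤ)-(n:ℤ) = (j:ℤ) ∨ 2*(i:ℤ)-(n:ℤ) = -(j:ℤ) then 1 else 0) : ℝ)
                + (if 2*(i:ℤ)-(n:ℤ) = (j:ℤ)+1 ∨ 2*(i:ℤ)-(n:ℤ) = -((j:ℤ)+1) then 1 else 0))) := by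
                apply mul_le_mul_of_nonneg_left hb
                  (mul_nonneg (mul_nonneg (c_pos i).le (c_pos _).le) (by positivity))
            _ = (π/2)*(ρ^2)^n * (c i * c (n-i) *
                ((if (2*(i:ℤ)-n = (j:ℤ) ∨ 2*(i:ℤ)-n = -(j:ℤ)) then (1:ℝ) else 0)
                + (if (2*(i:ℤ)-n = (j:ℤ)+1 ∨ 2*(i:ℤ)-n = -((j:ℤ)+1)) then (1:ℝ) else 0))) := by
                rw [hρn]; ring
      _ = (π/2)*(ρ^2)^n * (∑ i ∈ range (n+1), c i * c (n-i) *
            ((if (2*(i:ℤ)-n = (j:ℤ) ∨ 2*(i:ℤ)-n = -(j:ℤ)) then (1:ℝ) else 0)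
            + (if (2*(i:ℤ)-n = (j:ℤ)+1 ∨ 2*(i:ℤ)-n = -((j:ℤ)+1)) then (1:ℝ) else 0))) := by
          rw [Finset.mul_sum]
      _ ≤ if j ≤ n then 2*π*(ρ^2)^n * c ((n+1)/2) else 0 := by
          have hs := sum_inds n j
          have hnn : (0:ℝ) ≤ (π/2)*(ρ^2)^n := by positivity
          split_ifs with hj
          · rw [if_pos hj] at hs
            calc (π/2)*(ρ^2)^n * _ ≤ (π/2)*(ρ^2)^n * (4 * c ((n+1)/2)) :=
                mul_le_mul_of_nonneg_left hs hnn
              _ = 2*π*(ρ^2)^n * c ((n+1)/2) := by ring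
          · rw [if_neg hj] at hs
            calc (π/2)*(ρ^2)^n * _ ≤ (π/2)*(ρ^2)^n * 0 := mul_le_mul_of_nonneg_left hs hnn
              _ = 0 := mul_zero _
  · intro i _
    apply Continuous.intervalIntegrable
    fun_prop



lemma tsum_int_bound {ρ : ℝ} (hρ0 : 0 ≤ ρ) (hρ1 : ρ < 1) (j : ℕ) :
    ‖∫ θ in (0:ℝ)..π, ((Real.sin θ * Real.sin ((2*(j:ℝ)+1)*θ) : ℝ) : ℂ)
        * (P ρ θ * conj (P ρ θ))‖
      ≤ 2*π*c ((j+1)/2) * (ρ^2)^j / (1-ρ^2) := by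
  have hρ2 : ρ^2 < 1 := by nlinarith
  have hρ2' : (0:ℝ) ≤ ρ^2 := by positivity
  set G : ℕ → ℝ → ℂ := fun n θ =>
    ((Real.sin θ * Real.sin ((2*(j:ℝ)+1)*θ) : ℝ) : ℂ) * F ρ n θ with hG
  have hcontG : ∀ n, Continuous (G n) := by
    intro n
    apply Continuous.mul _ (cont_F ρ n)
    fun_prop
  have hpt : ∀ θ : ℝ, ((Real.sin θ * Real.sin ((2*(j:ℝ)+1)*θ) : ℝ) : ℂ)
      * (P ρ θ * conj (P ρ θ)) = ∑' n : ℕ, G n θ := by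
    intro θ
    rw [P_mul_conj hρ0 hρ1 θ, ← tsum_mul_left]
  rw [intervalIntegral.integral_congr (fun θ _ => hpt θ)]
  rw [intervalIntegral.integral_of_le Real.pi_nonneg]
  have hint : ∀ n, Integrable (G n) (volume.restrict (Set.Ioc (0:ℝ) π)) :=
    fun n => (hcontG n).integrableOn_Ioc
  have hbound : ∀ n : ℕ, (∫ θ in Set.Ioc (0:ℝ) π, ‖G n θ‖) ≤ π * ((n+1) * (ρ^2)^n) := by
    intro n
    calc (∫ θ in Set.Ioc (0:ℝ) π, ‖G n θ‖)
        ≤ ∫ _θ in Set.Ioc (0:ℝ) π, ((n:ℝ)+1) * (ρ^2)^n := by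
          apply setIntegral_mono_on (hint n).norm
            (integrableOn_const (by simp [Real.pi_pos]) enorm_ne_top)
            measurableSet_Ioc
          intro θ _
          exact norm_G_le hρ0 j n θ
      _ = π * ((n+1) * (ρ^2)^n) := by
          rw [setIntegral_const, Real.volume_real_Ioc_of_le Real.pi_nonneg, sub_zero,
            smul_eq_mul]
  have hmaj : Summable (fun n : ℕ => π * ((n+1) * (ρ^2)^n)) := by
    apply Summable.mul_left
    have h1 : Summable (fun n : ℕ => (n:ℝ)^1 * (ρ^2)^n) :=
      summable_pow_mul_geometric_of_norm_lt_one 1 (by rw [Real.norm_eq_abs, _root_.abs_of_nonneg hρ2']; exact hρ2)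
    have h2 : Summable (fun n : ℕ => (ρ^2)^n) := summable_geometric_of_lt_one hρ2' hρ2
    apply Summable.congr (h1.add h2)
    intro n; push_cast; ring
  have hsumnorm : Summable fun n => ∫ θ in Set.Ioc (0:ℝ) π, ‖G n θ‖ :=
    Summable.of_nonneg_of_le (fun n => integral_nonneg (fun θ => norm_nonneg _)) hbound hmaj
  rw [← integral_tsum_of_summable_integral_norm hint hsumnorm]
  have hIoc_int : ∀ n : ℕ, (∫ θ in Set.Ioc (0:ℝ) π, G n θ) = ∫ θ in (0:ℝ)..π, G n θ :=
    fun n => (intervalIntegral.integral_of_le Real.pi_nonneg).symm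
  set h : ℕ → ℝ := fun n => if j ≤ n then 2*π*(ρ^2)^n * c ((n+1)/2) else 0 with hh
  have hh_nonneg : ∀ n, 0 ≤ h n := by
    intro n
    simp only [hh]
    split_ifs
    · have := c_pos ((n+1)/2); positivity
    · exact le_refl 0
  have hsum_h : Summable h := by
    apply Summable.of_nonneg_of_le hh_nonneg (fun n => ?_)
      ((summable_geometric_of_lt_one hρ2' hρ2).mul_left (2*π))
    simp only [hh]
    split_ifs
    · have hc := c_le_one ((n+1)/2)
      have hcp := c_pos ((n+1)/2)
      have hp : (0:ℝ) ≤ 2*π*(ρ^2)^n := by positivity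
      nlinarith
    · positivity
  have hnormint : ∀ n : ℕ, ‖∫ θ in Set.Ioc (0:ℝ) π, G n θ‖ ≤ h n := by
    intro n
    rw [hIoc_int n]
    simp only [hh]
    exact per_n_bound hρ0 j n
  have hsumint : Summable fun n => ‖∫ θ in Set.Ioc (0:ℝ) π, G n θ‖ :=
    Summable.of_nonneg_of_le (fun n => norm_nonneg _) hnormint hsum_h
  calc ‖∑' n, ∫ θ in Set.Ioc (0:ℝ) π, G n θ‖
      ≤ ∑' n, ‖∫ θ in Set.Ioc (0:ℝ) π, G n θ‖ := norm_tsum_le_tsum_norm hsumint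
    _ ≤ ∑' n, h n := Summable.tsum_le_tsum hnormint hsumint hsum_h
    _ ≤ 2*π*c ((j+1)/2) * (ρ^2)^j / (1-ρ^2) := by
        have hshift := Summable.sum_add_tsum_nat_add j hsum_h
        have hzero : (∑ i ∈ range j, h i) = 0 := by
          apply Finset.sum_eq_zero
          intro i hi
          simp only [mem_range] at hi
          simp only [hh]
          exact if_neg (by omega)
        rw [← hshift, hzero, zero_add]
        have hterm : ∀ i : ℕ, h (i + j) ≤ (2*π*c ((j+1)/2) * (ρ^2)^j) * (ρ^2)^i := by
          intro i
          simp only [hh]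
          rw [if_pos (by omega)]
          have hmono : c ((i+j+1)/2) ≤ c ((j+1)/2) :=
            c_anti (Nat.div_le_div_right (by omega))
          have e1 : 2*π*(ρ^2)^(i+j) * c ((i+j+1)/2) ≤ 2*π*(ρ^2)^(i+j) * c ((j+1)/2) :=
            mul_le_mul_of_nonneg_left hmono (by positivity)
          have e2 : 2*π*(ρ^2)^(i+j) * c ((j+1)/2) = (2*π*c ((j+1)/2) * (ρ^2)^j) * (ρ^2)^i := by
            rw [pow_add]; ring
          linarith
        have hgsum : Summable (fun i : ℕ => (2*π*c ((j+1)/2) * (ρ^2)^j) * (ρ^2)^i) :=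
          (summable_geometric_of_lt_one hρ2' hρ2).mul_left _
        calc (∑' i, h (i + j)) ≤ ∑' i, (2*π*c ((j+1)/2) * (ρ^2)^j) * (ρ^2)^i :=
            Summable.tsum_le_tsum hterm ((summable_nat_add_iff j).2 hsum_h) hgsum
          _ = (2*π*c ((j+1)/2) * (ρ^2)^j) * (1-ρ^2)⁻¹ := by
              rw [tsum_mul_left, tsum_geometric_of_lt_one hρ2' hρ2]
          _ = 2*π*c ((j+1)/2) * (ρ^2)^j / (1-ρ^2) := by rw [div_eq_mul_inv]



lemma one_sub_sq_pos {α : ℝ} (hα0 : 0 < α) (hα1 : α < 1) (θ : ℝ) :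
    0 < 1 - (α*Real.cos θ)^2 := by
  have h1 : (α*Real.cos θ)^2 ≤ α^2 := by
    have := Real.abs_cos_le_one θ
    have := abs_nonneg (Real.cos θ)
    calc (α*Real.cos θ)^2 = α^2 * |Real.cos θ|^2 := by rw [mul_pow, _root_.sq_abs]
      _ ≤ α^2 * 1^2 := by
          have h := Real.abs_cos_le_one θ
          have h2 : |Real.cos θ|^2 ≤ 1^2 := pow_le_pow_left₀ (abs_nonneg _) h 2
          nlinarith
      _ = α^2 := by ring
  nlinarith

lemma cont_inv_sqrt {α : ℝ} (hα0 : 0 < α) (hα1 : α < 1) :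
    Continuous (fun θ : ℝ => 1 / Real.sqrt (1 - (α*Real.cos θ)^2)) := by
  apply Continuous.div continuous_const
  · apply Real.continuous_sqrt.comp
    fun_prop
  · intro θ
    exact ne_of_gt (Real.sqrt_pos.2 (one_sub_sq_pos hα0 hα1 θ))

lemma parts {α : ℝ} (hα0 : 0 < α) (hα1 : α < 1) (k : ℕ) (hk : 1 ≤ k) :
    (∫ θ in (0:ℝ)..π, Real.arcsin (α * Real.cos θ) * Real.cos (k*θ))
    = (α/k) * ∫ θ in (0:ℝ)..π,
        Real.sin θ * Real.sin (k*θ) * (1 / Real.sqrt (1 - (α*Real.cos θ)^2)) := by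
  have hk0 : (k:ℝ) ≠ 0 := by positivity
  set u : ℝ → ℝ := fun θ => Real.arcsin (α * Real.cos θ) with hu
  set u' : ℝ → ℝ := fun θ =>
    (1 / Real.sqrt (1 - (α*Real.cos θ)^2)) * (α * (-Real.sin θ)) with hu'
  set v : ℝ → ℝ := fun θ => Real.sin (k*θ) / k with hv
  set v' : ℝ → ℝ := fun θ => Real.cos (k*θ) with hv'
  have hud : ∀ x ∈ Set.uIcc (0:ℝ) π, HasDerivAt u (u' x) x := by
    intro x _
    have hinner : HasDerivAt (fun θ : ℝ => α * Real.cos θ) (α * (-Real.sin x)) x :=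
      (Real.hasDerivAt_cos x).const_mul α
    have hne1 : α * Real.cos x ≠ -1 := by
      intro h
      have := one_sub_sq_pos hα0 hα1 x
      rw [h] at this; norm_num at this
    have hne2 : α * Real.cos x ≠ 1 := by
      intro h
      have := one_sub_sq_pos hα0 hα1 x
      rw [h] at this; norm_num at this
    have harc := Real.hasDerivAt_arcsin hne1 hne2
    have := harc.comp x hinner
    simpa [hu, hu', one_div, mul_comm, Function.comp_def] using this
  have hvd : ∀ x ∈ Set.uIcc (0:ℝ) π, HasDerivAt v (v' x) x := by
    intro x _
    have h1 : HasDerivAt (fun θ : ℝ => (k:ℝ)*θ) (k:ℝ) x := by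
      simpa using (hasDerivAt_id x).const_mul (k:ℝ)
    have h2 := (Real.hasDerivAt_sin ((k:ℝ)*x)).comp x h1
    have h3 := h2.div_const (k:ℝ)
    have : Real.cos ((k:ℝ)*x) * (k:ℝ) / (k:ℝ) = Real.cos ((k:ℝ)*x) := by
      field_simp
    rw [this] at h3
    exact h3
  have hu'int : IntervalIntegrable u' volume 0 π := by
    apply Continuous.intervalIntegrable
    exact (cont_inv_sqrt hα0 hα1).mul (by fun_prop)
  have hv'int : IntervalIntegrable v' volume 0 π := by
    apply Continuous.intervalIntegrable; fun_prop
  have hparts := intervalIntegral.integral_mul_deriv_eq_deriv_mul hud hvd hu'int hv'int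
  have hbv : v π = 0 := by
    simp [hv, Real.sin_nat_mul_pi]
  have hbv0 : v 0 = 0 := by simp [hv]
  rw [hbv, hbv0] at hparts
  simp only [mul_zero, zero_sub, sub_zero] at hparts
  calc (∫ θ in (0:ℝ)..π, Real.arcsin (α * Real.cos θ) * Real.cos (k*θ))
      = ∫ θ in (0:ℝ)..π, u θ * v' θ := by rfl
    _ = -∫ θ in (0:ℝ)..π, u' θ * v θ := hparts
    _ = ∫ θ in (0:ℝ)..π, -(u' θ * v θ) := by rw [intervalIntegral.integral_neg]
    _ = ∫ θ in (0:ℝ)..π, (α/k) *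
          (Real.sin θ * Real.sin (k*θ) * (1 / Real.sqrt (1 - (α*Real.cos θ)^2))) := by
        apply intervalIntegral.integral_congr
        intro θ _
        simp only [hu', hv]
        field_simp
    _ = (α/k) * ∫ θ in (0:ℝ)..π,
          Real.sin θ * Real.sin (k*θ) * (1 / Real.sqrt (1 - (α*Real.cos θ)^2)) := by
        rw [intervalIntegral.integral_const_mul]

lemma even_zero {α : ℝ} (k : ℕ) (hk : Even k) :
    (∫ θ in (0:ℝ)..π, Real.arcsin (α * Real.cos θ) * Real.cos (k*θ)) = 0 := by
  set f : ℝ → ℝ := fun θ => Real.arcsin (α * Real.cos θ) * Real.cos (k*θ) with hf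
  have h1 : (∫ θ in (0:ℝ)..π, f (π - θ)) = ∫ θ in (0:ℝ)..π, f θ := by
    rw [intervalIntegral.integral_comp_sub_left f π]
    norm_num
  have hcoskpi : Real.cos ((k:ℝ)*π) = 1 := by
    obtain ⟨m, hm⟩ := hk
    have : (k:ℝ)*π = m * (2*π) := by
      rw [hm]; push_cast; ring
    rw [this, Real.cos_nat_mul_two_pi]
  have h2 : ∀ θ : ℝ, f (π - θ) = - f θ := by
    intro θ
    simp only [hf]
    rw [Real.cos_pi_sub, mul_neg, Real.arcsin_neg]
    have : (k:ℝ) * (π - θ) = (k:ℝ)*π - (k:ℝ)*θ := by ring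
    rw [this, Real.cos_sub, hcoskpi, Real.sin_nat_mul_pi]
    ring
  have h3 : (∫ θ in (0:ℝ)..π, f (π - θ)) = -∫ θ in (0:ℝ)..π, f θ := by
    rw [show (fun θ => f (π - θ)) = fun θ => -f θ from funext h2]
    exact intervalIntegral.integral_neg
  have := h1.symm.trans h3
  linarith [this]



lemma c_half_le (j : ℕ) : c ((j+1)/2) ≤ 2 / Real.sqrt (2*j+1) := by
  set t := (j+1)/2 with ht
  have h4 : ((2*j+1 : ℕ):ℝ) ≤ 4*((t:ℝ)+1) := by
    have : 2*j+1 ≤ 4*(t+1) := by omega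
    push_cast
    exact_mod_cast Nat.cast_le.2 this
  have hsk : Real.sqrt (2*(j:ℝ)+1) ≤ 2 * Real.sqrt ((t:ℝ)+1) := by
    have h1 : Real.sqrt (2*(j:ℝ)+1) ≤ Real.sqrt (4*((t:ℝ)+1)) := by
      apply Real.sqrt_le_sqrt
      push_cast at h4
      linarith
    have h2 : Real.sqrt (4*((t:ℝ)+1)) = 2 * Real.sqrt ((t:ℝ)+1) := by
      rw [show (4:ℝ)*((t:ℝ)+1) = 2^2*((t:ℝ)+1) by norm_num, Real.sqrt_mul (by positivity),
        Real.sqrt_sq (by norm_num)]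
    linarith
  have hb := c_le_inv_sqrt t
  have hsp : 0 < Real.sqrt ((t:ℝ)+1) := Real.sqrt_pos.2 (by positivity)
  have hsp2 : 0 < Real.sqrt (2*(j:ℝ)+1) := Real.sqrt_pos.2 (by positivity)
  calc c t ≤ 1 / Real.sqrt ((t:ℝ)+1) := hb
    _ ≤ 2 / Real.sqrt (2*(j:ℝ)+1) := by
        rw [div_le_div_iff₀ hsp hsp2]
        linarith
    _ = 2 / Real.sqrt (2*j+1) := by norm_num

lemma rpow_neg_three_half (k : ℕ) (hk : 1 ≤ k) :
    (k:ℝ)^(-(3:ℝ)/2) = 1/((k:ℝ) * Real.sqrt k) := by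
  have hkpos : (0:ℝ) < k := by exact_mod_cast hk
  rw [show (-(3:ℝ)/2) = -(3/2) by norm_num, Real.rpow_neg hkpos.le]
  rw [show (3/2 : ℝ) = 1 + 1/2 by norm_num, Real.rpow_add hkpos, Real.rpow_one,
    ← Real.sqrt_eq_rpow, one_div]

end Stmt16

open Stmt16 Finset Complex MeasureTheory intervalIntegral
open scoped Real ComplexConjugate

/-- For the Kosloff–Tal-Ezer map `g(ξ) = arcsin(αξ)/arcsin α` with
`α ∈ (0,1)` and `ρ = (1 − √(1−α²))/α`, the Chebyshev coefficients
`a_k = (2/π)∫₀^π g(cos θ)cos(kθ)dθ` satisfy `|a_k| ≤ C·k^{−3/2}·ρ^k` for all `k ≥ 1`,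
for some constant `C > 0` depending on `α`. -/
theorem stmt_16 (α : ℝ) (hα : α ∈ Set.Ioo (0 : ℝ) 1) :
    ∃ C : ℝ, 0 < C ∧ ∀ k : ℕ, 1 ≤ k →
      |(2 / Real.pi) * ∫ θ in (0 : ℝ)..Real.pi,
          Real.arcsin (α * Real.cos θ) / Real.arcsin α * Real.cos (k * θ)| ≤
        C * (k : ℝ) ^ (-(3 : ℝ) / 2) * ((1 - Real.sqrt (1 - α ^ 2)) / α) ^ k := by
  obtain ⟨hα0, hα1⟩ := hα
  have h1a : 0 < 1 - α^2 := by nlinarith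
  set s := Real.sqrt (1 - α^2) with hsdef
  have hs2 : s^2 = 1 - α^2 := Real.sq_sqrt h1a.le
  have hs0 : 0 < s := Real.sqrt_pos.2 h1a
  have hs1 : s < 1 := by nlinarith [hs0]
  set ρ := (1 - s)/α with hρdef
  have hρ0 : 0 < ρ := div_pos (by linarith) hα0
  have hsgt : 1 - α < s := by nlinarith [hs0, hs2]
  have hρ1 : ρ < 1 := by
    rw [hρdef, div_lt_one hα0]
    linarith
  have hkey : α * (1+ρ^2) = 2*ρ := by
    rw [hρdef]
    field_simp
    linear_combination hs2
  have h1ρ : 0 < 1 - ρ^2 := by nlinarith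
  set A := Real.arcsin α with hAdef
  have hA0 : 0 < A := Real.arcsin_pos.2 hα0
  set C := 8*α*(1+ρ^2)/(A*(1-ρ^2)*ρ) with hCdef
  have hC0 : 0 < C := by
    apply div_pos
    · positivity
    · exact mul_pos (mul_pos hA0 h1ρ) hρ0
  refine ⟨C, hC0, ?_⟩
  intro k hk
  have hkpos : (0:ℝ) < k := by exact_mod_cast hk
  have hsplit : (∫ θ in (0:ℝ)..π, Real.arcsin (α * Real.cos θ) / A * Real.cos (k * θ))
      = (1/A) * ∫ θ in (0:ℝ)..π, Real.arcsin (α * Real.cos θ) * Real.cos (k * θ) := by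
    rw [← intervalIntegral.integral_const_mul]
    apply intervalIntegral.integral_congr
    intro θ _
    ring
  have hRHS0 : 0 ≤ C * (k:ℝ)^(-(3:ℝ)/2) * ρ^k := by
    apply mul_nonneg (mul_nonneg hC0.le (Real.rpow_nonneg hkpos.le _)) (pow_nonneg hρ0.le k)
  rcases Nat.even_or_odd k with he | ho
  · rw [hsplit, even_zero k he, mul_zero, mul_zero, abs_zero]
    exact hRHS0
  · obtain ⟨j, hj⟩ := ho
    have hkr : (k:ℝ) = 2*(j:ℝ)+1 := by rw [hj]; push_cast; ring
    set J : ℝ := ∫ θ in (0:ℝ)..π,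
      Real.sin θ * Real.sin ((2*(j:ℝ)+1)*θ) * Complex.normSq (P ρ θ) with hJdef
    have hI : (∫ θ in (0:ℝ)..π,
        Real.sin θ * Real.sin (k*θ) * (1 / Real.sqrt (1 - (α*Real.cos θ)^2)))
        = (1+ρ^2) * J := by
      rw [hJdef, ← intervalIntegral.integral_const_mul]
      apply intervalIntegral.integral_congr
      intro θ _
      dsimp only
      rw [inv_sqrt_eq hρ0.le hρ1 θ hα0 hα1 hkey, hkr]
      ring
    have hJc : ((J:ℝ):ℂ) = ∫ θ in (0:ℝ)..π,
        ((Real.sin θ * Real.sin ((2*(j:ℝ)+1)*θ) : ℝ) : ℂ) * (P ρ θ * conj (P ρ θ)) := by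
      rw [hJdef, ← intervalIntegral.integral_ofReal]
      apply intervalIntegral.integral_congr
      intro θ _
      dsimp only
      rw [Complex.mul_conj]
      push_cast
      ring
    have hJbound : |J| ≤ 2*π*c ((j+1)/2) * (ρ^2)^j / (1-ρ^2) := by
      have h1 : |J| = ‖((J:ℝ):ℂ)‖ := by
        rw [Complex.norm_real, Real.norm_eq_abs]
      rw [h1, hJc]
      exact tsum_int_bound hρ0.le hρ1 j
    -- assemble
    have htotal : (2/Real.pi) * ∫ θ in (0:ℝ)..π,
        Real.arcsin (α * Real.cos θ) / A * Real.cos (k * θ)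
        = (2*α*(1+ρ^2)/(Real.pi*A*k)) * J := by
      rw [hsplit, parts hα0 hα1 k hk, hI]
      field_simp
    have hpre : 0 < 2*α*(1+ρ^2)/(Real.pi*A*k) := by
      apply div_pos (by positivity)
      exact mul_pos (mul_pos Real.pi_pos hA0) hkpos
    rw [htotal, abs_mul, abs_of_pos hpre]
    -- numeric finish
    have hsqk : 0 < Real.sqrt k := Real.sqrt_pos.2 hkpos
    have hck : c ((j+1)/2) ≤ 2 / Real.sqrt k := by
      have := c_half_le j
      rw [show ((2*j+1 : ℝ)) = (k:ℝ) by rw [hkr]] at this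
      exact this
    have hρk : (ρ^2)^j * ρ = ρ^k := by
      rw [← pow_mul, ← pow_succ, hj]
    have hrpow := rpow_neg_three_half k hk
    calc (2*α*(1+ρ^2)/(Real.pi*A*k)) * |J|
        ≤ (2*α*(1+ρ^2)/(Real.pi*A*k)) * (2*π*c ((j+1)/2) * (ρ^2)^j / (1-ρ^2)) :=
          mul_le_mul_of_nonneg_left hJbound hpre.le
      _ = (4*α*(1+ρ^2)/(A*(1-ρ^2)*k)) * (c ((j+1)/2) * (ρ^2)^j) := by
          first
          | (field_simp; ring)
          | field_simp
      _ ≤ (4*α*(1+ρ^2)/(A*(1-ρ^2)*k)) * ((2/Real.sqrt k) * (ρ^2)^j) := by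
          apply mul_le_mul_of_nonneg_left _ (by positivity)
          apply mul_le_mul_of_nonneg_right hck (by positivity)
      _ = C * (1/((k:ℝ)*Real.sqrt k)) * ρ^k := by
          rw [hCdef, ← hρk]
          first
          | (field_simp; ring)
          | field_simp
      _ = C * (k:ℝ)^(-(3:ℝ)/2) * ρ^k := by rw [hrpow]
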